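/- Assume r and θ are nonconstant. Then the resultant R₁(t,k) = Res_s(α, β_k) ∈ ℝ[t,k] is a nonzero polynomial of positive degree in k; in fact, R₁ vanishes identically on the line k = 0, so the variable k divides R₁(t,k). In particular R₁ is not a constant polynomial. -/

import Mathlib

/-- The Sylvester matrix of two polynomials p, q over a commutative ring, of size
(q.natDegree + p.natDegree): the first q.natDegree rows carry the shifted coefficient
vectors of p (written from the leading coefficient), the remaining p.natDegree rows
carry those of q. -/
noncomputable def sylvesterMatrix {R : Type*} [CommRing R] (p q : Polynomial R) :
    Matrix (Fin (q.natDegree + p.natDegree)) (Fin (q.natDegree + p.natDegree)) R :=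
  Matrix.of fun i j =>
    if (i : ℕ) < q.natDegree then
      (if (j : ℕ) ≤ p.natDegree + (i : ℕ) then p.coeff (p.natDegree + (i : ℕ) - (j : ℕ)) else 0)
    else
      (if (j : ℕ) ≤ q.natDegree + ((i : ℕ) - q.natDegree) then
        q.coeff (q.natDegree + ((i : ℕ) - q.natDegree) - (j : ℕ)) else 0)

/-- The resultant of two polynomials: the determinant of their Sylvester matrix. -/
noncomputable def resultant {R : Type*} [CommRing R] (p q : Polynomial R) : R :=
  (sylvesterMatrix p q).det

open Polynomial in
/-- Row `i` of the Sylvester matrix is the coefficient vector (in decreasing powers)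
of `X^(m-1-i) * p` resp. `X^(n-1-(i-m)) * q`. -/
lemma sylvesterMatrix_apply {R : Type*} [CommRing R] (p q : Polynomial R)
    (i j : Fin (q.natDegree + p.natDegree)) :
    sylvesterMatrix p q i j =
      (if (i : ℕ) < q.natDegree then X ^ (q.natDegree - 1 - (i : ℕ)) * p
        else X ^ (p.natDegree - 1 - ((i : ℕ) - q.natDegree)) * q).coeff
        (q.natDegree + p.natDegree - 1 - (j : ℕ)) := by
  have hi := i.isLt
  have hj := j.isLt
  by_cases h : (i : ℕ) < q.natDegree
  · rw [sylvesterMatrix, Matrix.of_apply, if_pos h, if_pos h,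
      mul_comm (X ^ _ : Polynomial R) p, coeff_mul_X_pow']
    split_ifs with h1 h2 h2
    · congr 1; omega
    · exact absurd (by omega) h2
    · exact absurd (by omega) h1
    · rfl
  · rw [sylvesterMatrix, Matrix.of_apply, if_neg h, if_neg h,
      mul_comm (X ^ _ : Polynomial R) q, coeff_mul_X_pow']
    split_ifs with h1 h2 h2
    · congr 1; omega
    · exact absurd (by omega) h2
    · exact absurd (by omega) h1
    · rfl

open Polynomial

lemma sum_coeff_pow_eval {S : Type*} [CommRing S] (P : S[X]) (N : ℕ) (hP : P.natDegree < N)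
    (x : S) :
    ∑ j : Fin N, P.coeff (N - 1 - (j : ℕ)) * x ^ (N - 1 - (j : ℕ)) = P.eval x := by
  rw [Fin.sum_univ_eq_sum_range (fun j => P.coeff (N - 1 - j) * x ^ (N - 1 - j)) N,
    Finset.sum_range_reflect (fun j => P.coeff j * x ^ j) N]
  exact (eval_eq_sum_range' hP x).symm

/-- Over a field, the resultant of two coprime nonzero polynomials is nonzero. -/
lemma resultant_ne_zero_of_isCoprime {F : Type*} [Field F] {p q : F[X]}
    (hp : p ≠ 0) (hq : q ≠ 0) (h : IsCoprime p q) : _root_.resultant p q ≠ 0 := by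
  classical
  set n := p.natDegree with hn
  set m := q.natDegree with hm
  set N := m + n with hN
  intro hdet
  obtain ⟨c, hc0, hc⟩ := (Matrix.exists_vecMul_eq_zero_iff).mpr hdet
  -- the row polynomials
  set ρ : Fin N → F[X] := fun i =>
    if (i : ℕ) < m then X ^ (m - 1 - (i : ℕ)) * p
      else X ^ (n - 1 - ((i : ℕ) - m)) * q with hρ
  have hNpos : 0 < N := by
    rcases Nat.eq_zero_or_pos N with h0 | h0
    · exfalso; apply hc0; funext i; exact absurd i.isLt (by omega)
    · exact h0
  -- each row polynomial has degree < N
  have hρdeg : ∀ i : Fin N, (ρ i).natDegree < N := by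
    intro i
    have hi := i.isLt
    by_cases him : (i : ℕ) < m
    · calc (ρ i).natDegree ≤ (m - 1 - (i : ℕ)) + n := by
            rw [hρ]; simp only [if_pos him]
            refine le_trans (natDegree_mul_le) ?_
            simp [natDegree_X_pow, hn]
          _ < N := by omega
    · have hn1 : 1 ≤ n := by omega
      calc (ρ i).natDegree ≤ (n - 1 - ((i : ℕ) - m)) + m := by
            rw [hρ]; simp only [if_neg him]
            refine le_trans (natDegree_mul_le) ?_
            simp [natDegree_X_pow, hm]
          _ < N := by omega
  -- the combination of the rows
  set G : F[X] := ∑ i : Fin N, C (c i) * ρ i with hG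
  have hGcoeff : ∀ d, G.coeff d = ∑ i : Fin N, c i * (ρ i).coeff d := by
    intro d
    rw [hG, Polynomial.finset_sum_coeff]
    exact Finset.sum_congr rfl fun i _ => by rw [coeff_C_mul]
  have hGzero : G = 0 := by
    ext d
    rw [hGcoeff, Polynomial.coeff_zero]
    by_cases hd : d < N
    · have hjlt : N - 1 - d < N := by omega
      have := congrFun hc ⟨N - 1 - d, hjlt⟩
      simp only [Matrix.vecMul, dotProduct, Pi.zero_apply] at this
      rw [← this]
      refine Finset.sum_congr rfl fun i _ => ?_
      congr 1
      rw [sylvesterMatrix_apply]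
      show (ρ i).coeff d = _
      have hidx : q.natDegree + p.natDegree - 1 - (N - 1 - d) = d := by
        rw [← hm, ← hn, ← hN]; omega
      rw [Fin.val_mk, hidx]
    · refine Finset.sum_eq_zero fun i _ => ?_
      rw [Polynomial.coeff_eq_zero_of_natDegree_lt (lt_of_lt_of_le (hρdeg i) (by omega)),
        mul_zero]
  -- split G into u * p + v * q
  set u : F[X] := ∑ i : Fin N, if (i : ℕ) < m then C (c i) * X ^ (m - 1 - (i : ℕ)) else 0 with hu
  set v : F[X] := ∑ i : Fin N,
    if (i : ℕ) < m then 0 else C (c i) * X ^ (n - 1 - ((i : ℕ) - m)) with hv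
  have hsplit : u * p + v * q = G := by
    rw [hu, hv, hG, Finset.sum_mul, Finset.sum_mul, ← Finset.sum_add_distrib]
    refine Finset.sum_congr rfl fun i _ => ?_
    by_cases him : (i : ℕ) < m
    · rw [hρ]; simp only [if_pos him]; ring
    · rw [hρ]; simp only [if_neg him]; ring
  -- coprimality: v = 0
  have hvdeg : v.natDegree ≤ n - 1 := by
    refine Polynomial.natDegree_sum_le_of_forall_le _ _ fun i _ => ?_
    split_ifs
    · simp
    · refine le_trans (natDegree_mul_le) ?_
      rw [natDegree_C, natDegree_X_pow]
      omega
  have hpv : p ∣ v := by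
    have : v * q = -(u * p) := by linear_combination hsplit + hGzero
    exact h.dvd_of_dvd_mul_right ⟨-u, by linear_combination this⟩
  have hv0 : v = 0 := by
    by_contra hv0
    have h1 := Polynomial.natDegree_le_of_dvd hpv hv0
    have h2 : 1 ≤ n := by
      rcases Nat.eq_zero_or_pos n with h0 | h0
      · exfalso
        apply hv0
        rw [hv]
        refine Finset.sum_eq_zero fun i _ => ?_
        rw [if_pos (by have := i.isLt; omega)]
      · exact h0
    omega
  have hu0 : u = 0 := by
    have : u * p = 0 := by
      rw [hv0] at hsplit
      simpa [hGzero] using hsplit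
    rcases mul_eq_zero.mp this with h' | h'
    · exact h'
    · exact absurd h' hp
  -- extract that c = 0
  apply hc0
  funext i
  by_cases him : (i : ℕ) < m
  · have : u.coeff (m - 1 - (i : ℕ)) = c i := by
      rw [hu, Polynomial.finset_sum_coeff]
      rw [Finset.sum_eq_single i]
      · rw [if_pos him, coeff_C_mul, coeff_X_pow, if_pos rfl, mul_one]
      · intro i' _ hne
        by_cases him' : (i' : ℕ) < m
        · rw [if_pos him', coeff_C_mul, coeff_X_pow, if_neg, mul_zero]
          intro heq
          exact hne (Fin.ext (by omega))
        · rw [if_neg him', Polynomial.coeff_zero]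
      · intro hni; exact absurd (Finset.mem_univ i) hni
    rw [hu0] at this
    simpa using this.symm
  · have hi := i.isLt
    have : v.coeff (n - 1 - ((i : ℕ) - m)) = c i := by
      rw [hv, Polynomial.finset_sum_coeff]
      rw [Finset.sum_eq_single i]
      · rw [if_neg him, coeff_C_mul, coeff_X_pow, if_pos rfl, mul_one]
      · intro i' _ hne
        by_cases him' : (i' : ℕ) < m
        · rw [if_pos him', Polynomial.coeff_zero]
        · rw [if_neg him', coeff_C_mul, coeff_X_pow, if_neg, mul_zero]
          intro heq
          have hi' := i'.isLt
          exact hne (Fin.ext (by omega))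
      · intro hni; exact absurd (Finset.mem_univ i) hni
    rw [hv0] at this
    simpa using this.symm

/-- The resultant commutes with a ring hom that preserves the degrees. -/
lemma resultant_map {R S : Type*} [CommRing R] [CommRing S] (f : R →+* S) (p q : Polynomial R)
    (hp : (p.map f).natDegree = p.natDegree) (hq : (q.map f).natDegree = q.natDegree) :
    _root_.resultant (p.map f) (q.map f) = f (_root_.resultant p q) := by
  have hNN : q.natDegree + p.natDegree = (q.map f).natDegree + (p.map f).natDegree := by
    rw [hp, hq]
  rw [_root_.resultant, _root_.resultant, RingHom.map_det]
  rw [show sylvesterMatrix (p.map f) (q.map f)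
      = ((sylvesterMatrix p q).map f).submatrix (finCongr hNN.symm) (finCongr hNN.symm) from ?_]
  · exact Matrix.det_submatrix_equiv_self _ _
  · ext i j
    simp only [sylvesterMatrix, Matrix.submatrix_apply, Matrix.map_apply, Matrix.of_apply,
      finCongr_apply, Fin.coe_cast, hp, hq, Polynomial.coeff_map]
    split_ifs <;> simp


/- We work in ℝ[t,k][s]: the coefficient ring is MvPolynomial (Fin 2) ℝ with
t = X 0 and k = X 1, and s is the variable of the univariate polynomial ring. -/

/-- p(t), as a constant (in s) polynomial over ℝ[t,k]. -/
noncomputable def atT (p : Polynomial ℝ) : Polynomial (MvPolynomial (Fin 2) ℝ) :=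
  Polynomial.C (Polynomial.aeval (MvPolynomial.X 0) p)

/-- p(s), a polynomial in s over ℝ[t,k]. -/
noncomputable def atS (p : Polynomial ℝ) : Polynomial (MvPolynomial (Fin 2) ℝ) :=
  p.map (algebraMap ℝ (MvPolynomial (Fin 2) ℝ))

/-- α(t,s) = A(t)B(s) − A(s)B(t), as a polynomial in s over ℝ[t,k]. -/
noncomputable def alphaS (A B : Polynomial ℝ) : Polynomial (MvPolynomial (Fin 2) ℝ) :=
  atT A * atS B - atS A * atT B

/-- β_k(t,s) = C(t)D(s) − C(s)D(t) − 2kπ·D(t)D(s), as a polynomial in s over ℝ[t,k],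
with k an indeterminate (k = X 1). -/
noncomputable def betaS (C D : Polynomial ℝ) : Polynomial (MvPolynomial (Fin 2) ℝ) :=
  atT C * atS D - atS C * atT D -
    Polynomial.C (2 * MvPolynomial.X 1 * MvPolynomial.C Real.pi) * (atT D * atS D)

/-- R₁(t,k) = Res_s(α, β_k) ∈ ℝ[t,k]. -/
noncomputable def res1 (A B C D : Polynomial ℝ) : MvPolynomial (Fin 2) ℝ :=
  _root_.resultant (alphaS A B) (betaS C D)

/-- Retraction `ℝ[t,k] → ℝ[X]`, sending `t ↦ X`, `k ↦ c`. -/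
noncomputable def retr (c : ℝ) : MvPolynomial (Fin 2) ℝ →ₐ[ℝ] Polynomial ℝ :=
  MvPolynomial.aeval ![Polynomial.X, Polynomial.C c]

lemma retr_aevalX0 (c : ℝ) (e : Polynomial ℝ) :
    retr c (Polynomial.aeval (MvPolynomial.X 0) e) = e := by
  rw [← Polynomial.aeval_algHom_apply]
  simp [retr]

lemma retr_X1 (c : ℝ) : retr c (MvPolynomial.X 1) = Polynomial.C c := by
  simp [retr]

lemma aevalX0_eq_zero_iff (e : Polynomial ℝ) :
    Polynomial.aeval (MvPolynomial.X (R := ℝ) (0 : Fin 2)) e = 0 ↔ e = 0 := by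
  constructor
  · intro h
    have := congrArg (retr 0) h
    rwa [retr_aevalX0, map_zero] at this
  · rintro rfl; simp

lemma TK_eq_zero {e0 e1 : Polynomial ℝ}
    (h : Polynomial.aeval (MvPolynomial.X (R := ℝ) (0 : Fin 2)) e0
      + MvPolynomial.X 1 * Polynomial.aeval (MvPolynomial.X (R := ℝ) (0 : Fin 2)) e1 = 0) :
    e0 = 0 ∧ e1 = 0 := by
  have h0 := congrArg (retr 0) h
  have h1 := congrArg (retr 1) h
  rw [map_add, map_mul, retr_X1, retr_aevalX0, retr_aevalX0, map_zero] at h0 h1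
  simp only [map_zero, zero_mul, add_zero, map_one, one_mul] at h0 h1
  constructor
  · exact h0
  · have : e1 = (e0 + e1) - e0 := by ring
    rw [this, h1, h0, sub_zero]

lemma alphaS_coeff (A B : Polynomial ℝ) (j : ℕ) :
    (alphaS A B).coeff j = Polynomial.aeval (MvPolynomial.X (R := ℝ) (0 : Fin 2))
      (Polynomial.C (B.coeff j) * A - Polynomial.C (A.coeff j) * B) := by
  simp only [alphaS, atT, atS, Polynomial.coeff_sub, Polynomial.coeff_C_mul,
    Polynomial.coeff_mul_C, Polynomial.coeff_map]
  simp only [map_sub, map_mul, Polynomial.aeval_C, MvPolynomial.algebraMap_eq]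
  ring

lemma betaS_coeff (Cp Dp : Polynomial ℝ) (j : ℕ) :
    (betaS Cp Dp).coeff j =
      Polynomial.aeval (MvPolynomial.X (R := ℝ) (0 : Fin 2))
        (Polynomial.C (Dp.coeff j) * Cp - Polynomial.C (Cp.coeff j) * Dp)
      + MvPolynomial.X 1 * Polynomial.aeval (MvPolynomial.X (R := ℝ) (0 : Fin 2))
        (Polynomial.C (-(2 * Real.pi) * Dp.coeff j) * Dp) := by
  simp only [betaS, atT, atS, Polynomial.coeff_sub, Polynomial.coeff_C_mul,
    Polynomial.coeff_mul_C, Polynomial.coeff_map]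
  simp only [map_sub, map_mul, map_neg, map_add, Polynomial.aeval_C,
    MvPolynomial.algebraMap_eq, map_ofNat]
  ring

/-- If `A, B` are coprime and not both constant then `B_n A − A_n B ≠ 0`,
`n = max (deg A) (deg B)`. -/
lemma pencil_ne_zero {A B : Polynomial ℝ} (hAB : IsCoprime A B) (hB : B ≠ 0)
    (hr : ¬(A.natDegree = 0 ∧ B.natDegree = 0)) :
    Polynomial.C (B.coeff (max A.natDegree B.natDegree)) * A
      - Polynomial.C (A.coeff (max A.natDegree B.natDegree)) * B ≠ 0 := by
  set n := max A.natDegree B.natDegree with hn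
  intro h0
  have heq : Polynomial.C (B.coeff n) * A = Polynomial.C (A.coeff n) * B := by
    linear_combination h0
  by_cases hBn : B.coeff n = 0
  · -- then A.coeff n ≠ 0 is impossible together with B.coeff n = 0
    by_cases hAn : A.coeff n = 0
    · -- contradiction: n is the degree of A or B, one of them has nonzero coeff
      rcases max_cases A.natDegree B.natDegree with ⟨hm, _⟩ | ⟨hm, _⟩
      · by_cases hA : A = 0
        · have hnB : n = B.natDegree := by
            rw [hn, hA]; simp
          rw [hnB, Polynomial.coeff_natDegree] at hBn
          exact Polynomial.leadingCoeff_ne_zero.mpr hB hBn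
        · rw [hn, hm, Polynomial.coeff_natDegree] at hAn
          exact Polynomial.leadingCoeff_ne_zero.mpr hA hAn
      · rw [hn, hm, Polynomial.coeff_natDegree] at hBn
        exact Polynomial.leadingCoeff_ne_zero.mpr hB hBn
    · -- A coeff nonzero: A divides C (A.coeff n), so deg A = 0, so n = deg B ≥ 1, so An = 0
      have hdvd : A ∣ Polynomial.C (A.coeff n) * B := ⟨Polynomial.C (B.coeff n), by
        linear_combination -heq⟩
      have hdvd2 : A ∣ Polynomial.C (A.coeff n) :=
        hAB.dvd_of_dvd_mul_right hdvd
      have hdeg : A.natDegree = 0 := by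
        have := Polynomial.natDegree_le_of_dvd hdvd2 (by simpa using hAn)
        simpa using this
      have hnB : 0 < n := by
        rcases Nat.eq_zero_or_pos n with h | h
        · exact absurd ⟨hdeg, by omega⟩ hr
        · exact h
      exact hAn (Polynomial.coeff_eq_zero_of_natDegree_lt (by omega))
  · -- B coeff nonzero: B divides C (B.coeff n), so deg B = 0, so n = deg A ≥ 1, so Bn = 0
    have hdvd : B ∣ Polynomial.C (B.coeff n) * A := ⟨Polynomial.C (A.coeff n), by
      linear_combination heq⟩
    have hdvd2 : B ∣ Polynomial.C (B.coeff n) :=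
      hAB.symm.dvd_of_dvd_mul_right hdvd
    have hdeg : B.natDegree = 0 := by
      have := Polynomial.natDegree_le_of_dvd hdvd2 (by simpa using hBn)
      simpa using this
    have hnB : 0 < n := by
      rcases Nat.eq_zero_or_pos n with h | h
      · exact absurd ⟨by omega, hdeg⟩ hr
      · exact h
    exact hBn (Polynomial.coeff_eq_zero_of_natDegree_lt (by omega))

lemma alphaS_coeff_max_ne_zero {A B : Polynomial ℝ} (hAB : IsCoprime A B) (hB : B ≠ 0)
    (hr : ¬(A.natDegree = 0 ∧ B.natDegree = 0)) :
    (alphaS A B).coeff (max A.natDegree B.natDegree) ≠ 0 := by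
  rw [alphaS_coeff, ne_eq, aevalX0_eq_zero_iff]
  exact pencil_ne_zero hAB hB hr

lemma alphaS_natDegree (A B : Polynomial ℝ) :
    (alphaS A B).natDegree ≤ max A.natDegree B.natDegree := by
  rw [Polynomial.natDegree_le_iff_coeff_eq_zero]
  intro j hj
  rw [alphaS_coeff,
    Polynomial.coeff_eq_zero_of_natDegree_lt (lt_of_le_of_lt (le_max_left _ _) hj),
    Polynomial.coeff_eq_zero_of_natDegree_lt (lt_of_le_of_lt (le_max_right _ _) hj)]
  simp

lemma betaS_coeff_max_ne_zero {C D : Polynomial ℝ} (hCD : IsCoprime C D) (hD : D ≠ 0)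
    (hθ : ¬(C.natDegree = 0 ∧ D.natDegree = 0)) :
    (betaS C D).coeff (max C.natDegree D.natDegree) ≠ 0 := by
  set m := max C.natDegree D.natDegree with hm
  have hC : C ≠ 0 := by
    rintro rfl
    have hunit : IsUnit D := (isCoprime_zero_left).mp hCD
    exact hθ ⟨by simp, Polynomial.natDegree_eq_zero_of_isUnit hunit⟩
  rw [betaS_coeff]
  intro h0
  obtain ⟨h0, h1⟩ := TK_eq_zero h0
  by_cases hDm : D.coeff m = 0
  · -- then m = natDegree C and C.coeff m ≠ 0
    have hmC : m = C.natDegree := by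
      rcases max_cases C.natDegree D.natDegree with ⟨h', _⟩ | ⟨h', _⟩
      · rw [hm, h']
      · exfalso
        rw [hm, h', Polynomial.coeff_natDegree] at hDm
        exact Polynomial.leadingCoeff_ne_zero.mpr hD hDm
    have hCm : C.coeff m ≠ 0 := by
      rw [hmC, Polynomial.coeff_natDegree]
      exact Polynomial.leadingCoeff_ne_zero.mpr hC
    rw [hDm, map_zero, zero_mul, zero_sub, neg_eq_zero, mul_eq_zero] at h0
    rcases h0 with h0 | h0
    · exact hCm (by simpa using h0)
    · exact hD h0
  · rw [mul_eq_zero] at h1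
    rcases h1 with h1 | h1
    · rw [Polynomial.C_eq_zero, mul_eq_zero] at h1
      rcases h1 with h1 | h1
      · simp [Real.pi_ne_zero] at h1
      · exact hDm h1
    · exact hD h1

lemma betaS_natDegree (C D : Polynomial ℝ) :
    (betaS C D).natDegree ≤ max C.natDegree D.natDegree := by
  rw [Polynomial.natDegree_le_iff_coeff_eq_zero]
  intro j hj
  rw [betaS_coeff,
    Polynomial.coeff_eq_zero_of_natDegree_lt (lt_of_le_of_lt (le_max_left _ _) hj),
    Polynomial.coeff_eq_zero_of_natDegree_lt (lt_of_le_of_lt (le_max_right _ _) hj)]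
  simp

/-- The substitution `k ↦ 0` on `ℝ[t,k]`. -/
noncomputable def phi0 : MvPolynomial (Fin 2) ℝ →ₐ[ℝ] MvPolynomial (Fin 2) ℝ :=
  MvPolynomial.aeval ![MvPolynomial.X 0, 0]

lemma phi0_aevalX0 (e : Polynomial ℝ) :
    phi0 (Polynomial.aeval (MvPolynomial.X 0) e) = Polynomial.aeval (MvPolynomial.X 0) e := by
  rw [← Polynomial.aeval_algHom_apply]
  simp [phi0]

lemma phi0_X1 : phi0 (MvPolynomial.X 1) = 0 := by simp [phi0]

lemma alphaS_eval_X0 (A B : Polynomial ℝ) :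
    (alphaS A B).eval (MvPolynomial.X (R := ℝ) (0 : Fin 2)) = 0 := by
  simp only [alphaS, atT, atS, Polynomial.eval_sub, Polynomial.eval_mul, Polynomial.eval_C,
    Polynomial.eval_map, ← Polynomial.aeval_def]
  ring

lemma betaS_eval_X0 (C D : Polynomial ℝ) :
    (betaS C D).eval (MvPolynomial.X (R := ℝ) (0 : Fin 2)) =
      -(2 * MvPolynomial.X 1 * MvPolynomial.C Real.pi
        * (Polynomial.aeval (MvPolynomial.X (R := ℝ) (0 : Fin 2)) D
          * Polynomial.aeval (MvPolynomial.X (R := ℝ) (0 : Fin 2)) D)) := by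
  simp only [betaS, atT, atS, Polynomial.eval_sub, Polynomial.eval_mul, Polynomial.eval_C,
    Polynomial.eval_map, ← Polynomial.aeval_def]
  ring

lemma phi0_dvd (p : MvPolynomial (Fin 2) ℝ) : MvPolynomial.X 1 ∣ (p - phi0 p) := by
  induction p using MvPolynomial.induction_on with
  | C a => rw [show phi0 (MvPolynomial.C a) = MvPolynomial.C a from by simp [phi0]]; simp
  | add p q hp hq =>
      rw [map_add]
      have : p + q - (phi0 p + phi0 q) = (p - phi0 p) + (q - phi0 q) := by ring
      rw [this]
      exact dvd_add hp hq
  | mul_X p i hp =>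
      rw [map_mul]
      have : p * MvPolynomial.X i - phi0 p * phi0 (MvPolynomial.X i)
          = (p - phi0 p) * MvPolynomial.X i + phi0 p * (MvPolynomial.X i - phi0 (MvPolynomial.X i)) := by
        ring
      rw [this]
      refine dvd_add (Dvd.dvd.mul_right hp _) (Dvd.dvd.mul_left ?_ _)
      fin_cases i <;> simp [phi0]

lemma phi0_res1 (A B C D : Polynomial ℝ)
    (hN : 0 < (betaS C D).natDegree + (alphaS A B).natDegree) :
    phi0 (res1 A B C D) = 0 := by
  classical
  set R2 := MvPolynomial (Fin 2) ℝ
  set K := FractionRing R2 with hK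
  set f : R2 →+* K := (algebraMap R2 K).comp phi0.toRingHom with hf
  have hinj := IsFractionRing.injective R2 K
  have hcomp : ∀ y : R2, f y = algebraMap R2 K (phi0 y) := fun y => rfl
  suffices h : f (res1 A B C D) = 0 by
    apply hinj
    rw [← hcomp, h, map_zero]
  rw [res1, _root_.resultant, RingHom.map_det]
  set n := (alphaS A B).natDegree with hn
  set m := (betaS C D).natDegree with hm
  set N := m + n with hN'
  apply (Matrix.exists_mulVec_eq_zero_iff).mp
  refine ⟨fun j => f (MvPolynomial.X 0) ^ (N - 1 - (j : ℕ)), ?_, ?_⟩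
  · intro hw
    have h0 : f (MvPolynomial.X 0) ^ (N - 1 - (N - 1)) = 0 := congrFun hw ⟨N - 1, by omega⟩
    rw [Nat.sub_self, pow_zero] at h0
    exact one_ne_zero h0
  · have hfX1 : f (MvPolynomial.X 1) = 0 := by
      rw [hcomp, phi0_X1, map_zero]
    funext i
    simp only [Matrix.mulVec, dotProduct, Matrix.map_apply, Pi.zero_apply,
      RingHom.mapMatrix_apply]
    by_cases him : (i : ℕ) < m
    · have hrow : ∀ j : Fin N, f ((sylvesterMatrix (alphaS A B) (betaS C D)) i j)
          = ((X ^ (m - 1 - (i : ℕ)) * (alphaS A B)).map f).coeff (N - 1 - (j : ℕ)) := by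
        intro j
        rw [sylvesterMatrix_apply, if_pos him, Polynomial.coeff_map]
      rw [Finset.sum_congr rfl (fun j _ => by rw [hrow j])]
      have hdeg : ((X ^ (m - 1 - (i : ℕ)) * (alphaS A B)).map f).natDegree < N := by
        refine lt_of_le_of_lt (Polynomial.natDegree_map_le) ?_
        refine lt_of_le_of_lt (Polynomial.natDegree_mul_le) ?_
        rw [Polynomial.natDegree_X_pow]
        have hnn : (alphaS A B).natDegree = n := hn.symm
        omega
      rw [sum_coeff_pow_eval _ N hdeg]
      rw [Polynomial.eval_map, Polynomial.eval₂_at_apply, Polynomial.eval_mul,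
        Polynomial.eval_pow, Polynomial.eval_X, alphaS_eval_X0, mul_zero, map_zero]
    · have hrow : ∀ j : Fin N, f ((sylvesterMatrix (alphaS A B) (betaS C D)) i j)
          = ((X ^ (n - 1 - ((i : ℕ) - m)) * (betaS C D)).map f).coeff (N - 1 - (j : ℕ)) := by
        intro j
        rw [sylvesterMatrix_apply, if_neg him, Polynomial.coeff_map]
      rw [Finset.sum_congr rfl (fun j _ => by rw [hrow j])]
      have hin : (i : ℕ) < N := i.isLt
      have hdeg : ((X ^ (n - 1 - ((i : ℕ) - m)) * (betaS C D)).map f).natDegree < N := by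
        refine lt_of_le_of_lt (Polynomial.natDegree_map_le) ?_
        refine lt_of_le_of_lt (Polynomial.natDegree_mul_le) ?_
        rw [Polynomial.natDegree_X_pow]
        have hmm : (betaS C D).natDegree = m := hm.symm
        omega
      rw [sum_coeff_pow_eval _ N hdeg]
      rw [Polynomial.eval_map, Polynomial.eval₂_at_apply, Polynomial.eval_mul,
        Polynomial.eval_pow, Polynomial.eval_X, betaS_eval_X0]
      simp [map_mul, map_neg, map_pow, hfX1]

lemma phi0_eq_self_of_degreeOf_eq_zero {p : MvPolynomial (Fin 2) ℝ}
    (h : p.degreeOf 1 = 0) : phi0 p = p := by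
  have hrep := MvPolynomial.support_sum_monomial_coeff p
  calc phi0 p
      = phi0 (∑ u ∈ p.support, MvPolynomial.monomial u (MvPolynomial.coeff u p)) := by
        rw [hrep]
    _ = ∑ u ∈ p.support, phi0 (MvPolynomial.monomial u (MvPolynomial.coeff u p)) :=
        map_sum _ _ _
    _ = ∑ u ∈ p.support, MvPolynomial.monomial u (MvPolynomial.coeff u p) := by
        refine Finset.sum_congr rfl fun u hu => ?_
        have hu1 : u 1 = 0 := by
          rw [MvPolynomial.degreeOf_eq_sup] at h
          exact (Finset.sup_eq_bot_iff _ _).mp h u hu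
        have hu' : u = Finsupp.single 0 (u 0) := by
          ext i
          fin_cases i
          · simp
          · simp [hu1]
        rw [hu']
        simp [← MvPolynomial.C_mul_X_pow_eq_monomial, phi0]
    _ = p := hrep

/-- Evaluation `ℝ[t,k] → ℝ` at `(t₀, k₀)`. -/
noncomputable def evalTK (t₀ k₀ : ℝ) : MvPolynomial (Fin 2) ℝ →+* ℝ :=
  (MvPolynomial.aeval ![t₀, k₀] : MvPolynomial (Fin 2) ℝ →ₐ[ℝ] ℝ).toRingHom

lemma evalTK_aevalX0 (t₀ k₀ : ℝ) (e : Polynomial ℝ) :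
    evalTK t₀ k₀ (Polynomial.aeval (MvPolynomial.X 0) e) = e.eval t₀ := by
  rw [show evalTK t₀ k₀ (Polynomial.aeval (MvPolynomial.X 0) e)
      = (MvPolynomial.aeval ![t₀, k₀] : MvPolynomial (Fin 2) ℝ →ₐ[ℝ] ℝ)
        (Polynomial.aeval (MvPolynomial.X 0) e) from rfl,
    ← Polynomial.aeval_algHom_apply]
  simp [Polynomial.coe_aeval_eq_eval]

lemma evalTK_X1 (t₀ k₀ : ℝ) : evalTK t₀ k₀ (MvPolynomial.X 1) = k₀ := by
  simp [evalTK]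

lemma alphaS_map (A B : Polynomial ℝ) (t₀ k₀ : ℝ) :
    (alphaS A B).map (evalTK t₀ k₀)
      = Polynomial.C (A.eval t₀) * B - Polynomial.C (B.eval t₀) * A := by
  ext j
  rw [Polynomial.coeff_map, alphaS_coeff, evalTK_aevalX0]
  simp only [Polynomial.eval_sub, Polynomial.eval_mul, Polynomial.eval_C,
    Polynomial.coeff_sub, Polynomial.coeff_C_mul]
  ring

lemma betaS_map (Cp Dp : Polynomial ℝ) (t₀ k₀ : ℝ) :
    (betaS Cp Dp).map (evalTK t₀ k₀)
      = Polynomial.C (Cp.eval t₀ - 2 * Real.pi * k₀ * Dp.eval t₀) * Dp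
        - Polynomial.C (Dp.eval t₀) * Cp := by
  ext j
  rw [Polynomial.coeff_map, betaS_coeff, map_add, map_mul, evalTK_aevalX0, evalTK_aevalX0,
    evalTK_X1]
  simp only [Polynomial.eval_sub, Polynomial.eval_mul, Polynomial.eval_C,
    Polynomial.coeff_sub, Polynomial.coeff_C_mul]
  ring

/-- Two non-coprime real polynomials (the first nonzero) have a common complex root. -/
lemma exists_common_root_of_not_coprime {p q : Polynomial ℝ} (hp : p ≠ 0)
    (h : ¬ IsCoprime p q) :
    ∃ z : ℂ, (p.map (algebraMap ℝ ℂ)).eval z = 0 ∧ (q.map (algebraMap ℝ ℂ)).eval z = 0 := by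
  classical
  have h' : ¬ IsCoprime (p.map (algebraMap ℝ ℂ)) (q.map (algebraMap ℝ ℂ)) := by
    rwa [Polynomial.isCoprime_map]
  set g := EuclideanDomain.gcd (p.map (algebraMap ℝ ℂ)) (q.map (algebraMap ℝ ℂ)) with hg
  have hgne : g ≠ 0 := by
    intro h0
    have h1 := (EuclideanDomain.gcd_eq_zero_iff.mp h0).1
    exact hp (by simpa [Polynomial.map_eq_zero] using h1)
  have hgu : ¬ IsUnit g := fun hu => h' (EuclideanDomain.gcd_isUnit_iff.mp hu)
  obtain ⟨z, hz⟩ := Complex.exists_root (Polynomial.degree_pos_of_ne_zero_of_nonunit hgne hgu)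
  refine ⟨z, ?_, ?_⟩
  · obtain ⟨c, hc⟩ := EuclideanDomain.gcd_dvd_left (p.map (algebraMap ℝ ℂ)) (q.map (algebraMap ℝ ℂ))
    rw [hc, Polynomial.eval_mul, ← hg, hz, zero_mul]
  · obtain ⟨c, hc⟩ := EuclideanDomain.gcd_dvd_right (p.map (algebraMap ℝ ℂ)) (q.map (algebraMap ℝ ℂ))
    rw [hc, Polynomial.eval_mul, ← hg, hz, zero_mul]

lemma alphaS_natDegree_eq {A B : Polynomial ℝ} (hAB : IsCoprime A B) (hB : B ≠ 0)
    (hr : ¬(A.natDegree = 0 ∧ B.natDegree = 0)) :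
    (alphaS A B).natDegree = max A.natDegree B.natDegree :=
  le_antisymm (alphaS_natDegree A B)
    (Polynomial.le_natDegree_of_ne_zero (alphaS_coeff_max_ne_zero hAB hB hr))

lemma betaS_natDegree_eq {C D : Polynomial ℝ} (hCD : IsCoprime C D) (hD : D ≠ 0)
    (hθ : ¬(C.natDegree = 0 ∧ D.natDegree = 0)) :
    (betaS C D).natDegree = max C.natDegree D.natDegree :=
  le_antisymm (betaS_natDegree C D)
    (Polynomial.le_natDegree_of_ne_zero (betaS_coeff_max_ne_zero hCD hD hθ))

lemma natDegree_pencil_le (a b : ℝ) (P Q : Polynomial ℝ) :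
    (Polynomial.C a * P - Polynomial.C b * Q).natDegree ≤ max P.natDegree Q.natDegree := by
  refine le_trans (Polynomial.natDegree_sub_le _ _) ?_
  exact max_le_max (Polynomial.natDegree_C_mul_le _ _) (Polynomial.natDegree_C_mul_le _ _)

lemma exists_good_spec {A B Cp Dp : Polynomial ℝ} (hB : B ≠ 0) (hD : Dp ≠ 0)
    (hAB : IsCoprime A B) (hCD : IsCoprime Cp Dp)
    (hr : ¬(A.natDegree = 0 ∧ B.natDegree = 0))
    (hθ : ¬(Cp.natDegree = 0 ∧ Dp.natDegree = 0)) :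
    ∃ t₀ k₀ : ℝ,
      ((alphaS A B).map (evalTK t₀ k₀)).natDegree = max A.natDegree B.natDegree ∧
      ((betaS Cp Dp).map (evalTK t₀ k₀)).natDegree = max Cp.natDegree Dp.natDegree ∧
      (alphaS A B).map (evalTK t₀ k₀) ≠ 0 ∧ (betaS Cp Dp).map (evalTK t₀ k₀) ≠ 0 ∧
      IsCoprime ((alphaS A B).map (evalTK t₀ k₀)) ((betaS Cp Dp).map (evalTK t₀ k₀)) := by
  classical
  set n := max A.natDegree B.natDegree with hn
  set m := max Cp.natDegree Dp.natDegree with hm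
  have hCp : Cp ≠ 0 := by
    rintro rfl
    exact hθ ⟨by simp, Polynomial.natDegree_eq_zero_of_isUnit ((isCoprime_zero_left).mp hCD)⟩
  set e := Polynomial.C (B.coeff n) * A - Polynomial.C (A.coeff n) * B with he
  have hene : e ≠ 0 := pencil_ne_zero hAB hB hr
  -- choose t₀ avoiding the roots of e * D
  obtain ⟨t₀, ht₀⟩ := (Polynomial.finite_setOf_isRoot (mul_ne_zero hene hD)).infinite_compl.nonempty
  have ht₀' : e.eval t₀ ≠ 0 ∧ Dp.eval t₀ ≠ 0 := by
    have : ¬ (e * Dp).IsRoot t₀ := ht₀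
    rw [Polynomial.IsRoot, Polynomial.eval_mul] at this
    exact mul_ne_zero_iff.mp this
  set Dt := Dp.eval t₀ with hDt
  set p' := Polynomial.C (A.eval t₀) * B - Polynomial.C (B.eval t₀) * A with hp'
  have hp'coeff : p'.coeff n ≠ 0 := by
    have : p'.coeff n = e.eval t₀ := by
      rw [hp', he]
      simp only [Polynomial.coeff_sub, Polynomial.coeff_C_mul, Polynomial.eval_sub,
        Polynomial.eval_mul, Polynomial.eval_C]
      ring
    rw [this]; exact ht₀'.1
  have hp'ne : p' ≠ 0 := fun h0 => hp'coeff (by rw [h0]; simp)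
  have hp'deg : p'.natDegree = n := by
    refine le_antisymm (natDegree_pencil_le _ _ _ _ |>.trans ?_) (Polynomial.le_natDegree_of_ne_zero hp'coeff)
    rw [hn, max_comm]
  -- the pencil of specializations of beta
  set q : ℝ → Polynomial ℝ := fun l => Polynomial.C l * Dp - Polynomial.C Dt * Cp with hq
  -- bad sets
  set S1 : Set ℝ := {l | l * Dp.coeff m - Dt * Cp.coeff m = 0} with hS1
  set S2 : Set ℝ := {l | ¬ IsCoprime p' (q l)} with hS2
  have hS1fin : S1.Finite := by
    by_cases hDm : Dp.coeff m = 0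
    · have hCm : Cp.coeff m ≠ 0 := by
        have hmC : m = Cp.natDegree := by
          rcases max_cases Cp.natDegree Dp.natDegree with ⟨h', _⟩ | ⟨h', _⟩
          · rw [hm, h']
          · exfalso
            rw [hm, h', Polynomial.coeff_natDegree] at hDm
            exact Polynomial.leadingCoeff_ne_zero.mpr hD hDm
        rw [hmC, Polynomial.coeff_natDegree]
        exact Polynomial.leadingCoeff_ne_zero.mpr hCp
      have : S1 = ∅ := by
        ext l
        simp only [hS1, Set.mem_setOf_eq, Set.mem_empty_iff_false, iff_false]
        rw [hDm]
        intro h0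
        exact mul_ne_zero ht₀'.2 hCm (by linarith)
      rw [this]; exact Set.finite_empty
    · refine Set.Finite.subset (Set.finite_singleton (Dt * Cp.coeff m / Dp.coeff m)) ?_
      intro l hl
      rw [hS1] at hl
      simp only [Set.mem_setOf_eq] at hl
      simp only [Set.mem_singleton_iff]
      field_simp
      linarith
  have hS2fin : S2.Finite := by
    set f : ℝ → ℂ := fun l =>
      if h : ∃ z : ℂ, (p'.map (algebraMap ℝ ℂ)).eval z = 0
          ∧ ((q l).map (algebraMap ℝ ℂ)).eval z = 0 then h.choose else 0 with hf
    have hfspec : ∀ l ∈ S2, (p'.map (algebraMap ℝ ℂ)).eval (f l) = 0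
        ∧ ((q l).map (algebraMap ℝ ℂ)).eval (f l) = 0 := by
      intro l hl
      have hex := exists_common_root_of_not_coprime hp'ne hl
      rw [hf]
      simp only [dif_pos hex]
      exact hex.choose_spec
    have himg : (f '' S2) ⊆ {z : ℂ | (p'.map (algebraMap ℝ ℂ)).IsRoot z} := by
      rintro z ⟨l, hl, rfl⟩
      exact (hfspec l hl).1
    have hinj : Set.InjOn f S2 := by
      intro l1 hl1 l2 hl2 hfeq
      by_contra hne
      have h1 := (hfspec l1 hl1).2
      have h2 := (hfspec l2 hl2).2
      rw [hfeq] at h1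
      set z := f l2
      have hqeval : ∀ l : ℝ, ((q l).map (algebraMap ℝ ℂ)).eval z
          = (algebraMap ℝ ℂ l) * (Dp.map (algebraMap ℝ ℂ)).eval z
            - (algebraMap ℝ ℂ Dt) * (Cp.map (algebraMap ℝ ℂ)).eval z := by
        intro l
        rw [hq]
        simp [Polynomial.map_sub, Polynomial.map_mul, Polynomial.map_C]
      rw [hqeval] at h1 h2
      have hcast : ∀ r : ℝ, algebraMap ℝ ℂ r = (r : ℂ) := fun r => rfl
      have hDz : (Dp.map (algebraMap ℝ ℂ)).eval z = 0 := by
        have hsub : ((l1 : ℂ) - (l2 : ℂ))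
            * (Dp.map (algebraMap ℝ ℂ)).eval z = 0 := by
          rw [hcast] at h1 h2
          linear_combination h1 - h2
        rcases mul_eq_zero.mp hsub with h | h
        · exact absurd (by exact_mod_cast sub_eq_zero.mp h) hne
        · exact h
      have hCz : (Cp.map (algebraMap ℝ ℂ)).eval z = 0 := by
        rw [hDz, mul_zero, zero_sub, neg_eq_zero, mul_eq_zero, hcast] at h1
        rcases h1 with h | h
        · exact absurd h (Complex.ofReal_ne_zero.mpr ht₀'.2)
        · exact h
      obtain ⟨u, v, huv⟩ := hCD.map (Polynomial.mapRingHom (algebraMap ℝ ℂ))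
      have := congrArg (Polynomial.eval z) huv
      simp only [Polynomial.eval_add, Polynomial.eval_mul, Polynomial.eval_one,
        Polynomial.coe_mapRingHom] at this
      rw [hCz, hDz] at this
      simp at this
    exact Set.Finite.of_finite_image
      (Set.Finite.subset (Polynomial.finite_setOf_isRoot (by
        rwa [ne_eq, Polynomial.map_eq_zero])) himg) hinj
  -- pick a good l
  obtain ⟨l, hl⟩ := ((hS1fin.union hS2fin).infinite_compl).nonempty
  have hlS1 : l ∉ S1 := fun h => hl (Set.mem_union_left _ h)
  have hlS2 : l ∉ S2 := fun h => hl (Set.mem_union_right _ h)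
  -- the corresponding k₀
  have h2pi : 2 * Real.pi * Dt ≠ 0 :=
    mul_ne_zero (mul_ne_zero two_ne_zero Real.pi_ne_zero) ht₀'.2
  set k₀ := (Cp.eval t₀ - l) / (2 * Real.pi * Dt) with hk₀
  have hkey : Cp.eval t₀ - 2 * Real.pi * k₀ * Dp.eval t₀ = l := by
    rw [hk₀, ← hDt]
    field_simp
    rw [mul_div_cancel_right₀ _ ht₀'.2]; ring
  have hαmap : (alphaS A B).map (evalTK t₀ k₀) = p' := by
    rw [alphaS_map, hp']
  have hβmap : (betaS Cp Dp).map (evalTK t₀ k₀) = q l := by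
    rw [betaS_map, hq, hkey, ← hDt]
  have hqcoeff : (q l).coeff m ≠ 0 := by
    have : (q l).coeff m = l * Dp.coeff m - Dt * Cp.coeff m := by
      rw [hq]
      simp [Polynomial.coeff_sub, Polynomial.coeff_C_mul]
    rw [this]
    exact fun h => hlS1 (by rwa [hS1, Set.mem_setOf_eq])
  have hqne : q l ≠ 0 := fun h0 => hqcoeff (by rw [h0]; simp)
  have hqdeg : (q l).natDegree = m := by
    refine le_antisymm ?_ (Polynomial.le_natDegree_of_ne_zero hqcoeff)
    rw [hq]
    refine le_trans (natDegree_pencil_le _ _ _ _) ?_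
    rw [hm, max_comm]
  refine ⟨t₀, k₀, ?_, ?_, ?_, ?_, ?_⟩
  · rw [hαmap, hp'deg, hn]
  · rw [hβmap, hqdeg, hm]
  · rw [hαmap]; exact hp'ne
  · rw [hβmap]; exact hqne
  · rw [hαmap, hβmap]
    exact not_not.mp (by rwa [hS2, Set.mem_setOf_eq] at hlS2)


/- STATEMENT 8: if r and θ are nonconstant, then R₁(t,k) = Res_s(α, β_k) is a nonzero
polynomial of positive degree in k; in fact the variable k divides R₁.
(In particular R₁ is not constant.) -/
theorem resultant_alpha_beta_nonconstant_in_k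
    (A B C D : Polynomial ℝ) (hB : B ≠ 0) (hD : D ≠ 0)
    (hAB : IsCoprime A B) (hCD : IsCoprime C D)
    (hr : ¬ (A.natDegree = 0 ∧ B.natDegree = 0))
    (hθ : ¬ (C.natDegree = 0 ∧ D.natDegree = 0)) :
    res1 A B C D ≠ 0 ∧
    0 < (res1 A B C D).degreeOf 1 ∧
    MvPolynomial.X 1 ∣ res1 A B C D := by
  have hα_deg := alphaS_natDegree_eq hAB hB hr
  have hβ_deg := betaS_natDegree_eq hCD hD hθ
  obtain ⟨t₀, k₀, h1, h2, h3, h4, h5⟩ := exists_good_spec hB hD hAB hCD hr hθ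
  have hmapdegα : ((alphaS A B).map (evalTK t₀ k₀)).natDegree = (alphaS A B).natDegree := by
    rw [h1, hα_deg]
  have hmapdegβ : ((betaS C D).map (evalTK t₀ k₀)).natDegree = (betaS C D).natDegree := by
    rw [h2, hβ_deg]
  have hres := resultant_map (evalTK t₀ k₀) (alphaS A B) (betaS C D) hmapdegα hmapdegβ
  have hne : res1 A B C D ≠ 0 := by
    intro h0
    have hL1 := resultant_ne_zero_of_isCoprime h3 h4 h5
    apply hL1
    rw [hres, show _root_.resultant (alphaS A B) (betaS C D) = res1 A B C D from rfl, h0, map_zero]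
  have hNpos : 0 < (betaS C D).natDegree + (alphaS A B).natDegree := by
    have hmax : 0 < max A.natDegree B.natDegree := by
      rcases Nat.eq_zero_or_pos (max A.natDegree B.natDegree) with h | h
      · exact absurd ⟨Nat.le_zero.mp (h ▸ le_max_left _ _),
          Nat.le_zero.mp (h ▸ le_max_right _ _)⟩ hr
      · exact h
    rw [hα_deg]
    omega
  have hphi := phi0_res1 A B C D hNpos
  have hdvd : MvPolynomial.X 1 ∣ res1 A B C D := by
    have := phi0_dvd (res1 A B C D)
    rwa [hphi, sub_zero] at this
  refine ⟨hne, ?_, hdvd⟩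
  rcases Nat.eq_zero_or_pos ((res1 A B C D).degreeOf 1) with h | h
  · exact absurd (by rw [← phi0_eq_self_of_degreeOf_eq_zero h, hphi]) hne
  · exact h
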